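/- Let a, b, c, d be four distinct points in ℝ² such that the open segments ab and cd cross at a point o, and let μ'' be the minimum distance between any pair of points in {a, b, c, d}. If the angle ∠cob is at most π/3, then (|ab| + |cd|) − (|ad| + |cb|) ≥ μ''. -/
import Mathlib

open EuclideanGeometry Real

noncomputable section

/-- Points of the Euclidean plane. -/
abbrev Pt : Type := EuclideanSpace ℝ (Fin 2)

lemma side_le_max (x o y : Pt) (h : ∠ x o y ≤ π / 3) :
    dist x y ≤ max (dist o x) (dist o y) := by
  have hcos : Real.cos (∠ x o y) ≥ 1 / 2 := by
    have h1 : Real.cos (π / 3) ≤ Real.cos (∠ x o y) :=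
      Real.cos_le_cos_of_nonneg_of_le_pi (EuclideanGeometry.angle_nonneg x o y)
        (by linarith [Real.pi_pos]) h
    rw [Real.cos_pi_div_three] at h1
    linarith
  have hlc := EuclideanGeometry.law_cos x o y
  have h1 : dist o x = dist x o := dist_comm o x
  have h2 : dist o y = dist y o := dist_comm o y
  have hx : 0 ≤ dist x o := dist_nonneg
  have hy : 0 ≤ dist y o := dist_nonneg
  have hxy : 0 ≤ dist x y := dist_nonneg
  have hkey : dist x o * dist y o ≤ 2 * dist x o * dist y o * Real.cos (∠ x o y) := by
    nlinarith [mul_nonneg hx hy]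
  rcases le_total (dist x o) (dist y o) with hle | hle
  · have : dist x y ≤ dist y o := by
      nlinarith [mul_nonneg hx hy, mul_nonneg (sub_nonneg.2 hle) hx]
    rw [h1, h2]; exact le_max_of_le_right this
  · have : dist x y ≤ dist x o := by
      nlinarith [mul_nonneg hx hy, mul_nonneg (sub_nonneg.2 hle) hy]
    rw [h1, h2]; exact le_max_of_le_left this

/-- If the open segments `ab` and `cd` (on four distinct points) cross
at `o`, `μ''` is the minimum pairwise distance among `{a, b, c, d}`, and `∠cob ≤ π/3`,
then `(|ab| + |cd|) - (|ad| + |cb|) ≥ μ''`. -/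
theorem stmt2 (a b c d o : Pt)
    (hab : a ≠ b) (hac : a ≠ c) (had : a ≠ d) (hbc : b ≠ c) (hbd : b ≠ d) (hcd : c ≠ d)
    (ho₁ : o ∈ openSegment ℝ a b) (ho₂ : o ∈ openSegment ℝ c d)
    (μ'' : ℝ)
    (hμ : μ'' = min (dist a b) (min (dist a c) (min (dist a d)
            (min (dist b c) (min (dist b d) (dist c d))))))
    (hangle : ∠ c o b ≤ π / 3) :
    (dist a b + dist c d) - (dist a d + dist c b) ≥ μ'' := by
  have hoa : o ≠ a := by rintro rfl; exact hab (left_mem_openSegment_iff.1 ho₁)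
  have hob : o ≠ b := by rintro rfl; exact hab (right_mem_openSegment_iff.1 ho₁)
  have hoc : o ≠ c := by rintro rfl; exact hcd (left_mem_openSegment_iff.1 ho₂)
  have hod : o ≠ d := by rintro rfl; exact hcd (right_mem_openSegment_iff.1 ho₂)
  have hs₁ : Sbtw ℝ a o b :=
    ⟨mem_segment_iff_wbtw.1 (openSegment_subset_segment ℝ a b ho₁), hoa, hob⟩
  have hs₂ : Sbtw ℝ c o d :=
    ⟨mem_segment_iff_wbtw.1 (openSegment_subset_segment ℝ c d ho₂), hoc, hod⟩
  have hπ₁ : ∠ a o b = π := hs₁.angle₁₂₃_eq_pi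
  have hπ₂ : ∠ c o d = π := hs₂.angle₁₂₃_eq_pi
  -- vertical angles: ∠ a o d = ∠ b o c = ∠ c o b
  have hπ₂' : ∠ d o c = π := by rw [EuclideanGeometry.angle_comm]; exact hπ₂
  have hvert : ∠ a o d = ∠ b o c :=
    EuclideanGeometry.angle_eq_angle_of_angle_eq_pi_of_angle_eq_pi hπ₁ hπ₂'
  have hangle' : ∠ a o d ≤ π / 3 := by
    rw [hvert, EuclideanGeometry.angle_comm]; exact hangle
  -- segment length splits
  have hab' : dist a o + dist o b = dist a b :=
    dist_add_dist_of_mem_segment (openSegment_subset_segment ℝ a b ho₁)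
  have hcd' : dist c o + dist o d = dist c d :=
    dist_add_dist_of_mem_segment (openSegment_subset_segment ℝ c d ho₂)
  -- side bounds
  have hAD : dist a d ≤ max (dist o a) (dist o d) := side_le_max a o d hangle'
  have hCB : dist c b ≤ max (dist o c) (dist o b) := side_le_max c o b hangle
  -- μ'' lower bounds
  have h1 : μ'' ≤ dist o a + dist o b := by
    rw [hμ, dist_comm o a, ← hab']; exact min_le_left _ _
  have h2 : μ'' ≤ dist o a + dist o c := by
    have : dist a c ≤ dist a o + dist o c := dist_triangle a o c
    rw [dist_comm o a]
    refine le_trans ?_ this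
    rw [hμ]
    exact le_trans (min_le_right _ _) (min_le_left _ _)
  have h3 : μ'' ≤ dist o d + dist o b := by
    have : dist b d ≤ dist b o + dist o d := dist_triangle b o d
    rw [dist_comm o b]
    have hμle : μ'' ≤ dist b d := by
      rw [hμ]
      exact le_trans (min_le_right _ _) (le_trans (min_le_right _ _)
        (le_trans (min_le_right _ _) (le_trans (min_le_right _ _) (min_le_left _ _))))
    linarith
  have h4 : μ'' ≤ dist o d + dist o c := by
    have hμle : μ'' ≤ dist c d := by
      rw [hμ]
      exact le_trans (min_le_right _ _) (le_trans (min_le_right _ _)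
        (le_trans (min_le_right _ _) (le_trans (min_le_right _ _) (min_le_right _ _))))
    have e : dist o c = dist c o := dist_comm o c
    linarith
  have hca : dist a o = dist o a := dist_comm a o
  have hcc : dist c o = dist o c := dist_comm c o
  rcases max_cases (dist o a) (dist o d) with ⟨e1, i1⟩ | ⟨e1, i1⟩ <;>
    rcases max_cases (dist o c) (dist o b) with ⟨e2, i2⟩ | ⟨e2, i2⟩ <;>
    rw [e1] at hAD <;> rw [e2] at hCB <;> linarith
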